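/- Let (g_t)_{t=s}^{e} be piecewise constant with change-points contained in (s,e) and ∑_{t=s}^{e} g_t = 0, and suppose there exists a change-point η_q ∈ (s,e) such that (η_q − s + 1) ∧ (e − η_q) > c_2 T^β, the jump satisfies |g_{η_q+1} − g_{η_q}| ≥ δ > 0, and g is constant on (η_q − c_2 T^β, η_q] and on (η_q, η_q + c_2 T^β]. Then there exists a change-point η_{q′} ∈ (s,e) and a constant C_4 > 0 (depending only on c_2) such that |C_{η_{q′}}((g_t)_{t=s}^e)| = max_{b∈[s,e)} |C_b((g_t)_{t=s}^e)| ≥ C_4 δ T^{β−1/2}, where e − s + 1 ≤ T. -/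

import Mathlib

open Finset

/-- The CUSUM statistic of the sequence `a` over the interval `[s, e]`, evaluated at
`b ∈ [s, e)`. -/
noncomputable def cusum (a : ℕ → ℝ) (s b e : ℕ) : ℝ :=
  Real.sqrt (((e : ℝ) - b) / (((e : ℝ) - s + 1) * ((b : ℝ) - s + 1))) *
      ∑ t ∈ Finset.Icc s b, a t -
    Real.sqrt (((b : ℝ) - s + 1) / (((e : ℝ) - s + 1) * ((e : ℝ) - b))) *
      ∑ t ∈ Finset.Icc (b + 1) e, a t

lemma quad_interp (α γ c p q x0 x x1 : ℝ) (hc : 0 ≤ c) (h0 : x0 ≤ x) (h1 : x ≤ x1)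
    (q0 : (α*x0+γ)^2 ≤ c*((x0 - p + 1)*(q - x0)))
    (q1 : (α*x1+γ)^2 ≤ c*((x1 - p + 1)*(q - x1))) :
    (α*x+γ)^2 ≤ c*((x - p + 1)*(q - x)) := by
  rcases eq_or_lt_of_le (h0.trans h1) with heq | hlt
  · have hx0 : x = x0 := le_antisymm (heq ▸ h1) h0
    subst hx0; exact q0
  · have key : (x1-x0) * ((α*x+γ)^2 - c*((x-p+1)*(q-x))) =
      (x1-x)*((α*x0+γ)^2 - c*((x0-p+1)*(q-x0))) + (x-x0)*((α*x1+γ)^2 - c*((x1-p+1)*(q-x1)))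
      - (α^2+c)*((x-x0)*((x1-x)*(x1-x0))) := by ring
    have e0 : (x1-x)*((α*x0+γ)^2 - c*((x0-p+1)*(q-x0))) ≤ 0 :=
      mul_nonpos_of_nonneg_of_nonpos (by linarith) (by linarith)
    have e1 : (x-x0)*((α*x1+γ)^2 - c*((x1-p+1)*(q-x1))) ≤ 0 :=
      mul_nonpos_of_nonneg_of_nonpos (by linarith) (by linarith)
    have e2 : 0 ≤ (α^2+c)*((x-x0)*((x1-x)*(x1-x0))) := by
      apply mul_nonneg (by positivity)
      apply mul_nonneg (by linarith) (mul_nonneg (by linarith) (by linarith))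
    nlinarith [key]

lemma sum_split (g : ℕ → ℝ) (s b e : ℕ) (hs : 1 ≤ s) (hsb : s - 1 ≤ b) (hbe : b ≤ e) :
    ∑ t ∈ Icc s e, g t = (∑ t ∈ Icc s b, g t) + ∑ t ∈ Icc (b+1) e, g t := by
  have h1 : Icc s e = Ioc (s-1) e := by
    rw [← Finset.Icc_add_one_left_eq_Ioc, Nat.sub_add_cancel hs]
  have h2 : Icc s b = Ioc (s-1) b := by
    rw [← Finset.Icc_add_one_left_eq_Ioc, Nat.sub_add_cancel hs]
  have h3 : Icc (b+1) e = Ioc b e := by rw [← Finset.Icc_add_one_left_eq_Ioc]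
  rw [h1, h2, h3, Finset.sum_Ioc_consecutive _ hsb hbe]

lemma cusum_eq (g : ℕ → ℝ) (s b e : ℕ) (hs : 1 ≤ s) (hsb : s ≤ b) (hbe : b < e)
    (hsum : ∑ t ∈ Icc s e, g t = 0) :
    cusum g s b e =
      Real.sqrt (((e:ℝ) - s + 1) / (((b:ℝ) - s + 1) * ((e:ℝ) - b))) * ∑ t ∈ Icc s b, g t := by
  have hsplit := sum_split g s b e hs (by omega) hbe.le
  have h2 : ∑ t ∈ Icc (b+1) e, g t = - ∑ t ∈ Icc s b, g t := by linarith
  set n : ℝ := (e:ℝ) - s + 1 with hn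
  set p : ℝ := (b:ℝ) - s + 1 with hp
  set q : ℝ := (e:ℝ) - b with hq
  have hp1 : (1:ℝ) ≤ p := by
    have : (s:ℝ) ≤ b := by exact_mod_cast hsb
    simp [hp]; linarith
  have hq1 : (1:ℝ) ≤ q := by
    have : (b:ℝ) + 1 ≤ e := by exact_mod_cast hbe
    simp [hq]; linarith
  have hnpq : n = p + q := by simp [hn, hp, hq]; ring
  have hp0 : (0:ℝ) < p := by linarith
  have hq0 : (0:ℝ) < q := by linarith
  have hn0 : (0:ℝ) < n := by linarith
  have key : Real.sqrt (n/(p*q)) = Real.sqrt (q/(n*p)) + Real.sqrt (p/(n*q)) := by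
    have hA : (0:ℝ) ≤ q/(n*p) := by positivity
    have hsq : (Real.sqrt (q/(n*p)) + Real.sqrt (p/(n*q)))^2 = n/(p*q) := by
      have hmul : Real.sqrt (q/(n*p)) * Real.sqrt (p/(n*q)) = 1/n := by
        rw [← Real.sqrt_mul hA]
        have : q/(n*p) * (p/(n*q)) = (1/n)^2 := by field_simp
        rw [this, Real.sqrt_sq (by positivity)]
      rw [add_sq, Real.sq_sqrt hA, Real.sq_sqrt (by positivity : (0:ℝ) ≤ p/(n*q)),
        mul_assoc, hmul]
      field_simp
      ring
    rw [← hsq, Real.sqrt_sq (by positivity)]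
  unfold cusum
  rw [h2]
  rw [show ((e:ℝ) - b) / (((e:ℝ) - s + 1) * ((b:ℝ) - s + 1)) = q/(n*p) by rw [hn,hp,hq],
      show ((b:ℝ) - s + 1) / (((e:ℝ) - s + 1) * ((e:ℝ) - b)) = p/(n*q) by rw [hn,hp,hq]]
  rw [key]
  ring

lemma cusum_sq (g : ℕ → ℝ) (s b e : ℕ) (hs : 1 ≤ s) (hsb : s ≤ b) (hbe : b < e)
    (hsum : ∑ t ∈ Icc s e, g t = 0) :
    (cusum g s b e)^2 * (((b:ℝ) - s + 1) * ((e:ℝ) - b))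
      = ((e:ℝ) - s + 1) * (∑ t ∈ Icc s b, g t)^2 := by
  have hp1 : (1:ℝ) ≤ (b:ℝ) - s + 1 := by
    have : (s:ℝ) ≤ b := by exact_mod_cast hsb
    linarith
  have hq1 : (1:ℝ) ≤ (e:ℝ) - b := by
    have : (b:ℝ) + 1 ≤ e := by exact_mod_cast hbe
    linarith
  have hn0 : (0:ℝ) < (e:ℝ) - s + 1 := by linarith
  rw [cusum_eq g s b e hs hsb hbe hsum, mul_pow,
    Real.sq_sqrt (by positivity : (0:ℝ) ≤ ((e:ℝ) - s + 1) / (((b:ℝ) - s + 1) * ((e:ℝ) - b)))]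
  field_simp

/-- From comparison of CUSUMs to comparison of scaled partial sums and back. -/
lemma cusum_abs_le_iff (g : ℕ → ℝ) (s e k m : ℕ) (hs : 1 ≤ s)
    (hk1 : s ≤ k) (hk2 : k < e) (hm1 : s ≤ m) (hm2 : m < e)
    (hsum : ∑ t ∈ Icc s e, g t = 0) :
    |cusum g s k e| ≤ |cusum g s m e| ↔
      (∑ t ∈ Icc s k, g t)^2 * (((m:ℝ) - s + 1) * ((e:ℝ) - m))
        ≤ (∑ t ∈ Icc s m, g t)^2 * (((k:ℝ) - s + 1) * ((e:ℝ) - k)) := by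
  have hpk : (0:ℝ) < ((k:ℝ) - s + 1) := by
    have : (s:ℝ) ≤ k := by exact_mod_cast hk1
    linarith
  have hqk : (0:ℝ) < ((e:ℝ) - k) := by
    have : (k:ℝ) + 1 ≤ e := by exact_mod_cast hk2
    linarith
  have hpm : (0:ℝ) < ((m:ℝ) - s + 1) := by
    have : (s:ℝ) ≤ m := by exact_mod_cast hm1
    linarith
  have hqm : (0:ℝ) < ((e:ℝ) - m) := by
    have : (m:ℝ) + 1 ≤ e := by exact_mod_cast hm2
    linarith
  have hn0 : (0:ℝ) < (e:ℝ) - s + 1 := by linarith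
  have ek := cusum_sq g s k e hs hk1 hk2 hsum
  have em := cusum_sq g s m e hs hm1 hm2 hsum
  have hKp : (0:ℝ) < ((k:ℝ) - s + 1) * ((e:ℝ) - k) := mul_pos hpk hqk
  have hMp : (0:ℝ) < ((m:ℝ) - s + 1) * ((e:ℝ) - m) := mul_pos hpm hqm
  have key : (cusum g s k e)^2 * ((((k:ℝ) - s + 1) * ((e:ℝ) - k)) * ((((m:ℝ) - s + 1) * ((e:ℝ) - m))))
      = ((e:ℝ) - s + 1) * ((∑ t ∈ Icc s k, g t)^2 * (((m:ℝ) - s + 1) * ((e:ℝ) - m))) := by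
    rw [← mul_assoc, ek, mul_assoc]
  have key2 : (cusum g s m e)^2 * ((((k:ℝ) - s + 1) * ((e:ℝ) - k)) * ((((m:ℝ) - s + 1) * ((e:ℝ) - m))))
      = ((e:ℝ) - s + 1) * ((∑ t ∈ Icc s m, g t)^2 * (((k:ℝ) - s + 1) * ((e:ℝ) - k))) := by
    rw [mul_comm (((k:ℝ) - s + 1) * ((e:ℝ) - k)), ← mul_assoc, em, mul_assoc]
  rw [← sq_le_sq, ← mul_le_mul_iff_of_pos_right (mul_pos hKp hMp), key, key2,
    mul_le_mul_iff_of_pos_left hn0]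

lemma const_of_steps (g : ℕ → ℝ) (a b : ℕ)
    (h : ∀ t, a ≤ t → t < b → g (t+1) = g t) :
    ∀ t, a ≤ t → t ≤ b → g t = g a := by
  intro t ht htb
  induction t, ht using Nat.le_induction with
  | base => rfl
  | succ n hn ih => rw [h n hn (by omega)]; exact ih (by omega)

lemma sum_const_Icc (g : ℕ → ℝ) (a b : ℕ) (v : ℝ) (hab : a ≤ b)
    (h : ∀ t, a + 1 ≤ t → t ≤ b → g t = v) :
    ∑ t ∈ Icc (a+1) b, g t = ((b - a : ℕ) : ℝ) * v := by
  have h1 : ∑ t ∈ Icc (a+1) b, g t = ∑ _t ∈ Icc (a+1) b, v :=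
    Finset.sum_congr rfl (fun t ht => by
      rw [Finset.mem_Icc] at ht; exact h t ht.1 ht.2)
  rw [h1, Finset.sum_const, Nat.card_Icc, show b + 1 - (a + 1) = b - a by omega,
    nsmul_eq_mul]

set_option maxHeartbeats 2000000 in
/-- Lemma 8 of the paper: if `g` on `[s, e]` (with `∑ g = 0` and all
its change-points in `(s, e)`, i.e. no change at `s`) has a change-point `η ∈ (s, e)` with
`(η - s + 1) ∧ (e - η) > c₂ T^β`, jump at least `δ > 0`, and `g` constant on
`(η - c₂ T^β, η]` and on `(η, η + c₂ T^β]`, then the maximum of `|C_b(g)|` over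
`b ∈ [s, e)` is attained at a change-point `η' ∈ (s, e)` and is at least
`C₄ δ T^{β - 1/2}`, where `C₄ > 0` depends only on `c₂`. -/
theorem maxAbsCusum_lower_bound (c₂ : ℝ) (hc₂ : 0 < c₂) :
    ∃ C₄ : ℝ, 0 < C₄ ∧
      ∀ (T s e η : ℕ) (β : ℝ) (g : ℕ → ℝ) (δ : ℝ),
        1 ≤ s → s < e → e ≤ T → 0 < β → β ≤ 1 → 0 < δ →
        (∑ t ∈ Finset.Icc s e, g t) = 0 →
        -- no change-point at the boundary point s
        g (s + 1) = g s →
        -- η is a change-point in (s, e), sufficiently distanced from both ends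
        s < η → η < e →
        c₂ * (T : ℝ) ^ β < ((min (η - s + 1) (e - η) : ℕ) : ℝ) →
        δ ≤ |g (η + 1) - g η| →
        -- g is constant on (η - c₂ T^β, η] and on (η, η + c₂ T^β]
        (∀ t : ℕ, (η : ℝ) - c₂ * (T : ℝ) ^ β < (t : ℝ) → t ≤ η → g t = g η) →
        (∀ t : ℕ, η < t → (t : ℝ) ≤ (η : ℝ) + c₂ * (T : ℝ) ^ β → g t = g (η + 1)) →
        ∃ η' : ℕ, s < η' ∧ η' < e ∧ g (η' + 1) ≠ g η' ∧
          (∀ b, s ≤ b → b < e → |cusum g s b e| ≤ |cusum g s η' e|) ∧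
          C₄ * δ * (T : ℝ) ^ (β - 1 / 2) ≤ |cusum g s η' e| := by
  refine ⟨c₂ / 4, by positivity, ?_⟩
  intro T s e η β g δ hs hse heT hβ0 hβ1 hδ hsum hnos hsη hηe hmin hjump hflatL hflatR
  classical
  have hT2 : 2 ≤ T := by omega
  have hT0 : (0:ℝ) < T := by exact_mod_cast (by omega : 0 < T)
  set x := c₂ * (T:ℝ)^β with hxdef
  have hx0 : (0:ℝ) < x := mul_pos hc₂ (Real.rpow_pos_of_pos hT0 β)
  -- the set of change points
  set K := (Icc s (e-1)).filter (fun b => g (b+1) ≠ g b) with hK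
  have hmemK : ∀ b, b ∈ K ↔ (s ≤ b ∧ b ≤ e - 1 ∧ g (b+1) ≠ g b) := by
    intro b; simp [hK, Finset.mem_filter, Finset.mem_Icc, and_assoc]
  have hjumpη : g (η+1) ≠ g η := by
    intro h; rw [h, sub_self, abs_zero] at hjump; linarith
  have hηK : η ∈ K := (hmemK η).2 ⟨hsη.le, by omega, hjumpη⟩
  obtain ⟨η', hη'K, hmax⟩ := K.exists_max_image (fun b => |cusum g s b e|) ⟨η, hηK⟩
  obtain ⟨hsη'0, hη'e0, hchg⟩ := (hmemK η').1 hη'K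
  have hsη' : s < η' := lt_of_le_of_ne hsη'0 (by rintro rfl; exact hchg hnos)
  have hη'e : η' < e := by omega
  have hden : (0:ℝ) < ((η':ℝ) - s + 1) * ((e:ℝ) - η') := by
    have h1 : (s:ℝ) ≤ η' := by exact_mod_cast hsη'0
    have h2 : (η':ℝ) + 1 ≤ e := by exact_mod_cast hη'e
    have : (0:ℝ) < (η':ℝ) - s + 1 := by linarith
    have : (0:ℝ) < (e:ℝ) - η' := by linarith
    positivity
  set c : ℝ := (∑ r ∈ Icc s η', g r)^2 / (((η':ℝ) - s + 1) * ((e:ℝ) - η')) with hcdef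
  have hc0 : 0 ≤ c := div_nonneg (sq_nonneg _) hden.le
  have hKbound : ∀ k, k ∈ K →
      (∑ r ∈ Icc s k, g r)^2 ≤ c * (((k:ℝ) - s + 1) * ((e:ℝ) - k)) := by
    intro k hk
    obtain ⟨h1, h2, h3⟩ := (hmemK k).1 hk
    have h4 := (cusum_abs_le_iff g s e k η' hs h1 (by omega) hsη'0 hη'e hsum).1 (hmax k hk)
    rw [hcdef, div_mul_eq_mul_div, le_div_iff₀ hden]
    exact h4
  -- Part A : the maximum over all b is attained at η'
  have claimA : ∀ b, s ≤ b → b < e → |cusum g s b e| ≤ |cusum g s η' e| := by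
    intro b hsb hbe
    by_cases hb : g (b+1) = g b
    case neg => exact hmax b ((hmemK b).2 ⟨hsb, by omega, hb⟩)
    -- b is not a change-point; interpolate between neighbouring change points
    have hex1 : ∃ j, b + j = e ∨ g (b + j + 1) ≠ g (b + j) := ⟨e - b, Or.inl (by omega)⟩
    set j := Nat.find hex1 with hj
    set x1 := b + j with hx1def
    have hspec : x1 = e ∨ g (x1 + 1) ≠ g x1 := Nat.find_spec hex1
    have hjpos : 1 ≤ j := by
      rcases Nat.eq_zero_or_pos j with h0 | h1
      · exfalso
        have h2 := hspec
        rw [hx1def, h0, Nat.add_zero] at h2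
        rcases h2 with h | h
        · omega
        · exact h hb
      · exact h1
    have hx1e : x1 ≤ e := by
      by_contra hgt
      push_neg at hgt
      have hlt : e - b < j := by omega
      exact Nat.find_min hex1 hlt (Or.inl (by omega))
    have hconstR : ∀ m, b ≤ m → m < x1 → g (m+1) = g m := by
      intro m hm1 hm2
      have hlt : m - b < j := by omega
      have hnot := Nat.find_min hex1 hlt
      push_neg at hnot
      have heq : b + (m - b) = m := by omega
      rw [heq] at hnot
      exact hnot.2
    set P : ℕ → Prop := fun l => l = s - 1 ∨ (s ≤ l ∧ g (l+1) ≠ g l) with hP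
    set x0 := Nat.findGreatest P b with hx0def
    have hPs1 : P (s-1) := Or.inl rfl
    have hPx0 : P x0 := Nat.findGreatest_spec (show s - 1 ≤ b by omega) hPs1
    have hx0b : x0 ≤ b := Nat.findGreatest_le b
    have hx0s : s - 1 ≤ x0 := Nat.le_findGreatest (by omega) hPs1
    have hx0ltb : x0 < b := by
      rcases Nat.lt_or_ge x0 b with h | h
      · exact h
      · exfalso
        have hxb : x0 = b := by omega
        rw [hxb] at hPx0
        rcases hPx0 with h1 | h2
        · omega
        · exact h2.2 hb
    have hconstL : ∀ l, x0 < l → l ≤ b → g (l+1) = g l := by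
      intro l h1 h2
      have hnP := Nat.findGreatest_is_greatest (show Nat.findGreatest P b < l from h1) h2
      by_contra hne
      exact hnP (Or.inr ⟨by omega, hne⟩)
    have hsteps : ∀ t, x0 + 1 ≤ t → t < x1 → g (t+1) = g t := by
      intro t h1 h2
      rcases Nat.lt_or_ge t b with h | h
      · exact hconstL t (by omega) (by omega)
      · exact hconstR t h h2
    have hconst : ∀ t, x0 + 1 ≤ t → t ≤ x1 → g t = g (x0 + 1) :=
      const_of_steps g (x0+1) x1 hsteps
    set v := g (x0 + 1) with hv
    have hbx1 : b + 1 ≤ x1 := by omega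
    have hSlin : ∀ t, x0 ≤ t → t ≤ x1 → ∑ r ∈ Icc s t, g r
        = (∑ r ∈ Icc s x0, g r) + ((t - x0 : ℕ) : ℝ) * v := by
      intro t h1 h2
      have hsplit := sum_split g s x0 t hs (by omega) h1
      rw [hsplit, sum_const_Icc g x0 t v h1 (fun r hr1 hr2 => hconst r hr1 (by omega))]
    set γ : ℝ := (∑ r ∈ Icc s x0, g r) - v * x0 with hγ
    have hlin : ∀ t : ℕ, x0 ≤ t → t ≤ x1 → v * t + γ = ∑ r ∈ Icc s t, g r := by
      intro t h1 h2
      rw [hSlin t h1 h2, Nat.cast_sub h1, hγ]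
      ring
    -- endpoint bounds for the convex quadratic
    have q0 : (v * (x0:ℝ) + γ)^2 ≤ c * (((x0:ℝ) - s + 1) * ((e:ℝ) - x0)) := by
      rcases hPx0 with h | ⟨hsx0, hjmp⟩
      · have hempty : ∑ r ∈ Icc s x0, g r = 0 := by
          rw [h, Finset.Icc_eq_empty (by omega), Finset.sum_empty]
        have hlhs : v * (x0:ℝ) + γ = 0 := by
          have := hlin x0 le_rfl (by omega)
          rw [this, hempty]
        have hx0cast : ((x0:ℝ) - s + 1) = 0 := by
          rw [h, Nat.cast_sub hs]
          push_cast
          ring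
        rw [hlhs, hx0cast, zero_mul, mul_zero]
        norm_num
      · have hkK : x0 ∈ K := (hmemK x0).2 ⟨hsx0, by omega, hjmp⟩
        rw [hlin x0 le_rfl (by omega)]
        exact hKbound x0 hkK
    have q1 : (v * (x1:ℝ) + γ)^2 ≤ c * (((x1:ℝ) - s + 1) * ((e:ℝ) - x1)) := by
      by_cases hx1e' : x1 = e
      · have hSx1 : ∑ r ∈ Icc s x1, g r = 0 := by rw [hx1e']; exact hsum
        have hlhs : v * (x1:ℝ) + γ = 0 := by
          rw [hlin x1 (by omega) le_rfl, hSx1]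
        have hcast : ((e:ℝ) - (x1:ℝ)) = 0 := by rw [hx1e']; ring
        rw [hlhs, hcast, mul_zero, mul_zero]
        norm_num
      · have hjmp := hspec.resolve_left hx1e'
        have hkK : x1 ∈ K := (hmemK x1).2 ⟨by omega, by omega, hjmp⟩
        rw [hlin x1 (by omega) le_rfl]
        exact hKbound x1 hkK
    have hx0le : ((x0:ℝ)) ≤ (b:ℝ) := by exact_mod_cast hx0b
    have hx1ge : ((b:ℝ)) ≤ (x1:ℝ) := by exact_mod_cast (by omega : b ≤ x1)
    have hfin := quad_interp v γ c (s:ℝ) (e:ℝ) (x0:ℝ) (b:ℝ) (x1:ℝ) hc0 hx0le hx1ge q0 q1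
    rw [hlin b hx0b (by omega)] at hfin
    apply (cusum_abs_le_iff g s e b η' hs hsb hbe hsη'0 hη'e hsum).2
    rw [hcdef, div_mul_eq_mul_div, le_div_iff₀ hden] at hfin
    exact hfin
  -- Part B : lower bound
  have hminL : x < (η:ℝ) - s + 1 := by
    have h1 : ((η - s + 1 : ℕ) : ℝ) = (η:ℝ) - s + 1 := by
      push_cast [Nat.cast_sub hsη.le]
      ring
    have h2 : ((min (η - s + 1) (e - η) : ℕ) : ℝ) ≤ ((η - s + 1 : ℕ) : ℝ) := by
      exact_mod_cast min_le_left _ _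
    linarith [hmin]
  have hminR : x < (e:ℝ) - η := by
    have h1 : ((e - η : ℕ) : ℝ) = (e:ℝ) - η := by
      push_cast [Nat.cast_sub hηe.le]
      ring
    have h2 : ((min (η - s + 1) (e - η) : ℕ) : ℝ) ≤ ((e - η : ℕ) : ℝ) := by
      exact_mod_cast min_le_right _ _
    linarith [hmin]
  set d := max 1 (Nat.floor x) with hddef
  have hd1 : 1 ≤ d := le_max_left _ _
  have hfloorle : ((Nat.floor x : ℕ):ℝ) ≤ x := Nat.floor_le hx0.le
  have hdηs : d ≤ η - s := by
    have h1 : Nat.floor x ≤ η - s := by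
      by_contra hcon
      push_neg at hcon
      have h2 : ((η - s + 1 : ℕ):ℝ) ≤ ((Nat.floor x : ℕ):ℝ) := by
        exact_mod_cast (by omega : η - s + 1 ≤ Nat.floor x)
      have h3 : ((η - s + 1 : ℕ) : ℝ) = (η:ℝ) - s + 1 := by
        push_cast [Nat.cast_sub hsη.le]; ring
      linarith
    exact max_le (by omega) h1
  have hdeη : d ≤ e - η := by
    have h1 : Nat.floor x ≤ e - η := by
      by_contra hcon
      push_neg at hcon
      have h2 : ((e - η : ℕ):ℝ) ≤ ((Nat.floor x : ℕ):ℝ) := by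
        exact_mod_cast (by omega : e - η ≤ Nat.floor x)
      have h3 : ((e - η : ℕ) : ℝ) = (e:ℝ) - η := by
        push_cast [Nat.cast_sub hηe.le]; ring
      linarith
    exact max_le (by omega) h1
  have hcastd : (d:ℝ) - 1 < x := by
    rcases le_or_gt (Nat.floor x) 1 with h | h
    · have hd1' : d = 1 := by omega
      rw [hd1']
      push_cast
      linarith
    · have hdfl : d = Nat.floor x := by omega
      rw [hdfl]
      linarith
  have hcase : d = 1 ∨ (d:ℝ) ≤ x := by
    rcases Nat.eq_zero_or_pos (Nat.floor x) with h | h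
    · left; omega
    · right
      have : d = Nat.floor x := by omega
      rw [this]
      exact hfloorle
  have hx2d : x ≤ 2 * d := by
    rcases le_or_gt x 2 with h | h
    · have h1 : (1:ℝ) ≤ (d:ℝ) := by exact_mod_cast hd1
      linarith
    · have hfl1 : 1 ≤ Nat.floor x := Nat.le_floor (by push_cast; linarith)
      have hdfl : d = Nat.floor x := by omega
      have h2 : x < ((Nat.floor x : ℕ):ℝ) + 1 := Nat.lt_floor_add_one x
      rw [hdfl]
      have h3 : (1:ℝ) ≤ ((Nat.floor x : ℕ):ℝ) := by exact_mod_cast hfl1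
      linarith
  -- partial-sum identities around η
  have hSL : ∑ r ∈ Icc s η, g r = (∑ r ∈ Icc s (η - d), g r) + (d:ℝ) * g η := by
    have hsplit := sum_split g s (η - d) η hs (by omega) (by omega)
    have hcst : ∀ t, (η - d) + 1 ≤ t → t ≤ η → g t = g η := by
      intro t h1 h2
      apply hflatL t _ h2
      have h3 : ((η - d + 1 : ℕ):ℝ) ≤ (t:ℝ) := by exact_mod_cast h1
      have h4 : ((η - d + 1 : ℕ):ℝ) = (η:ℝ) - d + 1 := by
        push_cast [Nat.cast_sub (by omega : d ≤ η)]; ring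
      rw [h4] at h3
      linarith
    rw [hsplit, sum_const_Icc g (η - d) η (g η) (by omega) hcst,
      show η - (η - d) = d by omega]
  have hSR : ∑ r ∈ Icc s (η + d), g r = (∑ r ∈ Icc s η, g r) + (d:ℝ) * g (η+1) := by
    have hsplit := sum_split g s η (η + d) hs (by omega) (by omega)
    have hcst : ∀ t, η + 1 ≤ t → t ≤ η + d → g t = g (η + 1) := by
      intro t h1 h2
      rcases hcase with h | h
      · have : t = η + 1 := by omega
        rw [this]
      · apply hflatR t (by omega)
        have h3 : (t:ℝ) ≤ ((η + d : ℕ):ℝ) := by exact_mod_cast h2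
        push_cast at h3
        linarith
    rw [hsplit, sum_const_Icc g η (η + d) (g (η+1)) (by omega) hcst,
      show η + d - η = d by omega]
  have hiden : ∑ r ∈ Icc s (η + d), g r - 2 * ∑ r ∈ Icc s η, g r + ∑ r ∈ Icc s (η - d), g r
      = (d:ℝ) * (g (η+1) - g η) := by
    linear_combination hSR - hSL
  have hjump3 : (d:ℝ) * δ ≤ |∑ r ∈ Icc s (η + d), g r| + 2 * |∑ r ∈ Icc s η, g r|
      + |∑ r ∈ Icc s (η - d), g r| := by
    have h1 : (d:ℝ) * δ ≤ |(d:ℝ) * (g (η+1) - g η)| := by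
      rw [abs_mul, Nat.abs_cast]
      exact mul_le_mul_of_nonneg_left hjump (Nat.cast_nonneg d)
    rw [← hiden] at h1
    have h2 := abs_add_le (∑ r ∈ Icc s (η + d), g r - 2 * ∑ r ∈ Icc s η, g r)
      (∑ r ∈ Icc s (η - d), g r)
    have h3 := abs_sub (∑ r ∈ Icc s (η + d), g r) (2 * ∑ r ∈ Icc s η, g r)
    have h4 : |2 * ∑ r ∈ Icc s η, g r| = 2 * |∑ r ∈ Icc s η, g r| := by
      rw [abs_mul]; norm_num
    linarith
  have hd0R : (0:ℝ) < d := by exact_mod_cast hd1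
  have key3 : ∃ k, s ≤ k ∧ k < e ∧ (d:ℝ) * δ ≤ 4 * |∑ r ∈ Icc s k, g r| := by
    by_cases h1 : (d:ℝ) * δ ≤ 4 * |∑ r ∈ Icc s (η - d), g r|
    · exact ⟨η - d, by omega, by omega, h1⟩
    by_cases h2 : (d:ℝ) * δ ≤ 4 * |∑ r ∈ Icc s η, g r|
    · exact ⟨η, hsη.le, hηe, h2⟩
    push_neg at h1 h2
    have h3 : (d:ℝ) * δ ≤ 4 * |∑ r ∈ Icc s (η + d), g r| := by linarith
    refine ⟨η + d, by omega, ?_, h3⟩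
    rcases Nat.lt_or_ge (η + d) e with h | h
    · exact h
    · exfalso
      have heq : η + d = e := by omega
      rw [heq, hsum, abs_zero, mul_zero] at h3
      nlinarith
  obtain ⟨k, hk1, hk2, hk3⟩ := key3
  have hsqT : (0:ℝ) < Real.sqrt T := Real.sqrt_pos.2 hT0
  -- scaling: 2 |S_k| ≤ √T * max
  have hMk : 2 * |∑ r ∈ Icc s k, g r| ≤ Real.sqrt T * |cusum g s η' e| := by
    have hpk : (0:ℝ) < ((k:ℝ) - s + 1) := by
      have : (s:ℝ) ≤ k := by exact_mod_cast hk1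
      linarith
    have hqk : (0:ℝ) < ((e:ℝ) - k) := by
      have : (k:ℝ) + 1 ≤ e := by exact_mod_cast hk2
      linarith
    have hn0 : (0:ℝ) < (e:ℝ) - s + 1 := by
      have h1 : (s:ℝ) ≤ k := by exact_mod_cast hk1
      linarith
    have hnT : (e:ℝ) - s + 1 ≤ (T:ℝ) := by
      have h1 : (e:ℝ) ≤ T := by exact_mod_cast heT
      have h2 : (1:ℝ) ≤ s := by exact_mod_cast hs
      linarith
    have h4T : (4:ℝ)/T ≤ ((e:ℝ) - s + 1)/(((k:ℝ) - s + 1) * ((e:ℝ) - k)) := by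
      rw [div_le_div_iff₀ hT0 (by positivity)]
      nlinarith [sq_nonneg (((k:ℝ) - s + 1) - ((e:ℝ) - k))]
    have hs4 := Real.sqrt_le_sqrt h4T
    have hs4' : Real.sqrt ((4:ℝ)/T) = 2 / Real.sqrt T := by
      rw [show (4:ℝ)/T = (2/Real.sqrt T)^2 by
        rw [div_pow, Real.sq_sqrt hT0.le]; norm_num]
      exact Real.sqrt_sq (by positivity)
    have hcabs : |cusum g s k e|
        = Real.sqrt (((e:ℝ) - s + 1)/(((k:ℝ) - s + 1) * ((e:ℝ) - k))) * |∑ r ∈ Icc s k, g r| := by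
      rw [cusum_eq g s k e hs hk1 hk2 hsum, abs_mul, abs_of_nonneg (Real.sqrt_nonneg _)]
    have hchain : 2 / Real.sqrt T * |∑ r ∈ Icc s k, g r| ≤ |cusum g s η' e| := by
      calc 2 / Real.sqrt T * |∑ r ∈ Icc s k, g r|
          ≤ Real.sqrt (((e:ℝ) - s + 1)/(((k:ℝ) - s + 1) * ((e:ℝ) - k))) * |∑ r ∈ Icc s k, g r| := by
            apply mul_le_mul_of_nonneg_right _ (abs_nonneg _)
            rw [← hs4']
            exact hs4
        _ = |cusum g s k e| := hcabs.symm
        _ ≤ |cusum g s η' e| := claimA k hk1 hk2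
    rw [div_mul_eq_mul_div, div_le_iff₀ hsqT] at hchain
    calc 2 * |∑ r ∈ Icc s k, g r| ≤ |cusum g s η' e| * Real.sqrt T := hchain
      _ = Real.sqrt T * |cusum g s η' e| := by ring
  have hfinal : x * δ ≤ 4 * (Real.sqrt T * |cusum g s η' e|) := by
    have h1 : x * δ ≤ 2 * ((d:ℝ) * δ) := by nlinarith
    linarith
  refine ⟨η', hsη', hη'e, hchg, claimA, ?_⟩
  have hrpow : (T:ℝ) ^ (β - 1/2) = (T:ℝ)^β / Real.sqrt T := by
    rw [Real.rpow_sub hT0, ← Real.sqrt_eq_rpow]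
  rw [hrpow]
  have heq2 : c₂ / 4 * δ * ((T:ℝ)^β / Real.sqrt T) = (x * δ) / (4 * Real.sqrt T) := by
    rw [hxdef]
    field_simp
  rw [heq2, div_le_iff₀ (by positivity)]
  calc x * δ ≤ 4 * (Real.sqrt T * |cusum g s η' e|) := hfinal
    _ = |cusum g s η' e| * (4 * Real.sqrt T) := by ring
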